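/- Let n ≥ 1 and ℓ ≥ 0 be integers and let ζ = exp(2πi/(n+1)) ∈ ℂ. For every integer k, the number of tuples m ∈ X(n,ℓ) with σ^k·m = m equals the complex number ∑_{m ∈ X(n,ℓ)} ζ^{k·ev(m)}. (This is the cyclic sieving phenomenon for the triple (X(n,ℓ), C_{n+1}, [n+ℓ choose ℓ]_q) arising from level-ℓ dominant weights of type A_n^{(1)}.) -/

import Mathlib

open Finset PowerSeries

open Finset PowerSeries

open Fin.CommRing

namespace CSPaux





lemma inv_unique {u a b : PowerSeries ℂ} (ha : u * a = 1) (hb : u * b = 1) : a = b := by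
  calc a = a * (u * b) := by rw [hb, mul_one]
    _ = u * a * b := by ring
    _ = b := by rw [ha, one_mul]

lemma geom_inv (a : ℂ) :
    (1 - PowerSeries.C a * X) * PowerSeries.mk (fun t => a ^ t) = 1 := by
  ext t
  rw [sub_mul, one_mul, map_sub]
  cases t with
  | zero => simp
  | succ t =>
      rw [mul_assoc, coeff_C_mul, coeff_succ_X_mul, coeff_mk, coeff_mk, coeff_one]
      simp [pow_succ, mul_comm]

lemma prod_range_mod {M : Type*} [CommMonoid M] (f : ℕ → M) (a b : ℕ) :
    ∏ i ∈ range (a * b), f (i % a) = (∏ i ∈ range a, f i) ^ b := by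
  induction b with
  | zero => simp
  | succ b ih =>
      rw [Nat.mul_succ, prod_range_add, ih, pow_succ]
      congr 1
      refine prod_congr rfl fun i hi => ?_
      rw [mem_range] at hi
      rw [add_comm, Nat.add_mul_mod_self_left, Nat.mod_eq_of_lt hi]

lemma sum_range_mod (f : ℕ → ℕ) (a b : ℕ) :
    ∑ i ∈ range (a * b), f (i % a) = b * ∑ i ∈ range a, f i := by
  induction b with
  | zero => simp
  | succ b ih =>
      rw [Nat.mul_succ, sum_range_add, ih, Nat.succ_mul]
      congr 1
      refine sum_congr rfl fun i hi => ?_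
      rw [mem_range] at hi
      rw [add_comm, Nat.add_mul_mod_self_left, Nat.mod_eq_of_lt hi]

lemma poly_prod_one_sub {e : ℕ} (he : 0 < e) {μ : ℂ} (hμ : IsPrimitiveRoot μ e) :
    ∏ r ∈ range e, (1 - Polynomial.C (μ ^ r) * Polynomial.X) = 1 - Polynomial.X ^ e := by
  have key : ∀ y : ℂ, ∏ r ∈ range e, (y - μ ^ r) = y ^ e - 1 := by
    intro y
    have h := X_pow_sub_C_eq_prod hμ he (one_pow e)
    have h2 := congrArg (Polynomial.eval y) h
    simpa [Polynomial.eval_prod, Polynomial.eval_sub, Polynomial.eval_pow,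
      Polynomial.eval_C, Polynomial.eval_X, mul_one] using h2.symm
  apply Polynomial.funext
  intro x
  simp only [Polynomial.eval_prod, Polynomial.eval_sub, Polynomial.eval_one, Polynomial.eval_mul,
    Polynomial.eval_C, Polynomial.eval_X, Polynomial.eval_pow]
  rcases eq_or_ne x 0 with rfl | hx
  · simp [zero_pow he.ne']
  · have h1 : ∀ r : ℕ, (1 : ℂ) - μ ^ r * x = x * (x⁻¹ - μ ^ r) := by
      intro r
      field_simp
    calc ∏ r ∈ range e, (1 - μ ^ r * x) = ∏ r ∈ range e, (x * (x⁻¹ - μ ^ r)) :=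
          prod_congr rfl fun r _ => h1 r
      _ = x ^ e * ((x⁻¹) ^ e - 1) := by rw [prod_mul_distrib, prod_const, card_range, key]
      _ = 1 - x ^ e := by
          rw [mul_sub, mul_one, ← mul_pow, mul_inv_cancel₀ hx, one_pow]

lemma ps_prod_one_sub {e : ℕ} (he : 0 < e) {μ : ℂ} (hμ : IsPrimitiveRoot μ e) :
    ∏ r ∈ range e, (1 - PowerSeries.C (μ ^ r) * X) = 1 - X ^ e := by
  have h := congrArg (Polynomial.coeToPowerSeries.ringHom (R := ℂ)) (poly_prod_one_sub he hμ)
  simpa [map_prod, map_sub, map_mul, map_pow, map_one,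
    Polynomial.coeToPowerSeries.ringHom_apply, Polynomial.coe_C, Polynomial.coe_X] using h


noncomputable def Fser (e d : ℕ) : PowerSeries ℂ :=
  PowerSeries.mk fun t => if e ∣ t then ((t / e + d - 1).choose (d - 1) : ℂ) else 0

lemma Fser_step {e : ℕ} (he : 0 < e) (d : ℕ) (hd : 0 < d) :
    (1 - X ^ e) * Fser e (d + 1) = Fser e d := by
  ext t
  rw [sub_mul, one_mul, map_sub, coeff_X_pow_mul']
  simp only [Fser, coeff_mk]
  by_cases hdvd : e ∣ t
  · obtain ⟨s, rfl⟩ := hdvd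
    have ht : e * s / e = s := Nat.mul_div_cancel_left s he
    rcases Nat.eq_zero_or_pos s with rfl | hs
    · rw [mul_zero]
      have h0 : ¬ e ≤ 0 := by omega
      rw [if_pos (dvd_zero e), if_pos (dvd_zero e), if_neg h0, Nat.zero_div]
      have e1 : 0 + (d + 1) - 1 = d := by omega
      have e2 : d + 1 - 1 = d := by omega
      have e3 : 0 + d - 1 = d - 1 := by omega
      rw [e1, e2, e3, Nat.choose_self, Nat.choose_self, sub_zero]
    · have hle : e ≤ e * s := Nat.le_mul_of_pos_right e hs
      have hsub : e * s - e = e * (s - 1) := by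
        cases s with
        | zero => omega
        | succ s' => rw [Nat.succ_sub_one, Nat.mul_succ]; omega
      have hdvd2 : e ∣ e * s - e := by rw [hsub]; exact Dvd.intro _ rfl
      rw [if_pos ⟨s, rfl⟩, if_pos hle, if_pos hdvd2, if_pos ⟨s, rfl⟩, ht, hsub,
        Nat.mul_div_cancel_left _ he]
      have harith1 : s + (d + 1) - 1 = (s + d - 1) + 1 := by omega
      have harith2 : s - 1 + (d + 1) - 1 = s + d - 1 := by omega
      have harith3 : d + 1 - 1 = (d - 1) + 1 := by omega
      have hnat : (s + (d + 1) - 1).choose (d + 1 - 1)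
          = (s + d - 1).choose (d - 1) + (s - 1 + (d + 1) - 1).choose (d + 1 - 1) := by
        rw [harith1, harith2, harith3, Nat.choose_succ_succ]
      rw [hnat]
      push_cast
      ring
  · rw [if_neg hdvd, if_neg hdvd]
    rcases le_or_gt e t with hle | hlt
    · have hnd : ¬ e ∣ t - e := fun hc => hdvd ((Nat.sub_add_cancel hle) ▸ Nat.dvd_add hc dvd_rfl)
      rw [if_pos hle, if_neg hnd, sub_zero]
    · rw [if_neg (not_le.mpr hlt), sub_zero]

lemma Fser_inv {e : ℕ} (he : 0 < e) : ∀ d : ℕ, 0 < d → (1 - X ^ e) ^ d * Fser e d = 1 := by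
  intro d
  induction d with
  | zero => intro h; omega
  | succ d ih =>
      intro _
      rcases Nat.eq_zero_or_pos d with rfl | hd
      · rw [pow_one, sub_mul, one_mul]
        ext t
        rw [map_sub, coeff_X_pow_mul']
        simp only [Fser, coeff_mk, coeff_one]
        have hc : ∀ u : ℕ, ((u / e + (0 + 1) - 1).choose (0 + 1 - 1) : ℂ) = 1 := fun u => by
          norm_num
        rcases Nat.eq_zero_or_pos t with rfl | ht
        · have h0 : ¬ e ≤ 0 := by omega
          rw [if_pos (dvd_zero e), if_neg h0, if_pos rfl, hc, sub_zero]
        · rw [if_neg ht.ne']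
          by_cases hdvd : e ∣ t
          · have hle : e ≤ t := Nat.le_of_dvd ht hdvd
            have h2 : e ∣ t - e := Nat.dvd_sub hdvd dvd_rfl
            rw [if_pos hdvd, if_pos hle, if_pos h2, hc, hc, sub_self]
          · rw [if_neg hdvd]
            rcases le_or_gt e t with hle | hlt
            · have hnd : ¬ e ∣ t - e :=
                fun hc => hdvd ((Nat.sub_add_cancel hle) ▸ Nat.dvd_add hc dvd_rfl)
              rw [if_pos hle, if_neg hnd, sub_zero]
            · rw [if_neg (not_le.mpr hlt), sub_zero]
      · rw [pow_succ, mul_assoc, Fser_step he d hd, ih hd]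


lemma dite_fin {D : ℕ} (m : Fin D → ℕ) (i : Fin D) :
    (if h : (i : ℕ) < D then m ⟨i, h⟩ else 0) = m i := by
  rw [dif_pos i.isLt]

lemma bridge (D s : ℕ) (f : ℕ → ℕ → ℂ) :
    (PowerSeries.coeff s) (∏ i ∈ range D, PowerSeries.mk (f i)) =
      ∑ m ∈ (Fintype.piFinset fun _ : Fin D => range (s + 1)).filter
          (fun m => ∑ i, m i = s), ∏ i : Fin D, f i.val (m i) := by
  rw [PowerSeries.coeff_prod]
  refine Finset.sum_nbij' (fun l => fun i : Fin D => l i.val)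
    (fun m => Finsupp.onFinset (range D) (fun j => if h : j < D then m ⟨j, h⟩ else 0)
      (fun j hj => mem_range.mpr (by by_contra hc; exact hj (dif_neg hc))))
    ?_ ?_ ?_ ?_ ?_
  · intro l hl
    rw [Finset.mem_finsuppAntidiag] at hl
    obtain ⟨hsum, hsupp⟩ := hl
    rw [mem_filter, Fintype.mem_piFinset]
    have hsum2 : ∑ i : Fin D, l i.val = s := by
      rw [Fin.sum_univ_eq_sum_range (fun j => l j) D]; exact hsum
    constructor
    · intro i
      rw [mem_range, Nat.lt_succ_iff, ← hsum2]
      exact Finset.single_le_sum (f := fun i : Fin D => l i.val)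
        (fun _ _ => Nat.zero_le _) (mem_univ i)
    · exact hsum2
  · intro m hm
    rw [mem_filter, Fintype.mem_piFinset] at hm
    obtain ⟨hmem, hsum⟩ := hm
    rw [Finset.mem_finsuppAntidiag]
    refine ⟨?_, Finsupp.support_onFinset_subset⟩
    simp only [Finsupp.coe_onFinset]
    rw [← Fin.sum_univ_eq_sum_range (fun j => if h : j < D then m ⟨j, h⟩ else 0) D]
    rw [Finset.sum_congr rfl (fun i _ => dite_fin m i)]
    exact hsum
  · intro l hl
    rw [Finset.mem_finsuppAntidiag] at hl
    obtain ⟨hsum, hsupp⟩ := hl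
    ext j
    simp only [Finsupp.onFinset_apply]
    by_cases hj : j < D
    · rw [dif_pos hj]
    · rw [dif_neg hj]
      by_contra hc
      have : j ∈ l.support := Finsupp.mem_support_iff.mpr (fun h => hc h.symm)
      exact hj (mem_range.mp (hsupp this))
  · intro m hm
    funext i
    simp only [Finsupp.onFinset_apply]
    exact dite_fin m i
  · intro l hl
    rw [Finset.prod_congr rfl (fun i _ => PowerSeries.coeff_mk (l i) (f i))]
    exact Finset.prod_range (fun j => f j (l j))



lemma comp_card (D s : ℕ) (hD : 0 < D) :
    ((Fintype.piFinset fun _ : Fin D => range (s + 1)).filter (fun m => ∑ i, m i = s)).card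
      = (s + D - 1).choose (D - 1) := by
  have hmk : PowerSeries.mk (fun t => (1 : ℂ) ^ t) = PowerSeries.mk (fun _ => (1 : ℂ)) := by
    ext t
    simp
  have hgeo : (1 - X : PowerSeries ℂ) * PowerSeries.mk (fun _ => (1 : ℂ)) = 1 := by
    have h := geom_inv 1
    rwa [map_one, one_mul, hmk] at h
  have hG : (1 - X : PowerSeries ℂ) ^ D
      * (∏ _i ∈ range D, PowerSeries.mk (fun _ => (1 : ℂ))) = 1 := by
    have hpc : (1 - X : PowerSeries ℂ) ^ D = ∏ _x ∈ range D, (1 - X : PowerSeries ℂ) := by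
      rw [Finset.prod_const, card_range]
    rw [hpc, ← Finset.prod_mul_distrib, Finset.prod_congr rfl (fun i _ => hgeo)]
    exact Finset.prod_const_one
  have hF : (1 - X : PowerSeries ℂ) ^ D * Fser 1 D = 1 := by
    have h := Fser_inv one_pos D hD
    rwa [pow_one] at h
  have hGF := inv_unique hG hF
  have hb := bridge D s (fun _ _ => (1 : ℂ))
  rw [hGF] at hb
  have hlhs : (PowerSeries.coeff s) (Fser 1 D) = ((s + D - 1).choose (D - 1) : ℂ) := by
    simp [Fser, Nat.div_one]
  rw [hlhs] at hb
  have hrhs : ∑ m ∈ (Fintype.piFinset fun _ : Fin D => range (s + 1)).filter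
      (fun m => ∑ i, m i = s), ∏ _i : Fin D, (1 : ℂ)
      = (((Fintype.piFinset fun _ : Fin D => range (s + 1)).filter
          (fun m => ∑ i, m i = s)).card : ℂ) := by
    simp
  rw [hrhs] at hb
  exact_mod_cast hb.symm



lemma conj_apply {α β : Type*} (g : Equiv.Perm α) (m : α → β) :
    (Equiv.arrowCongr g (Equiv.refl β)).symm m = m ∘ g := rfl

lemma conj_pow_nat {α β : Type*} (g : Equiv.Perm α) (t : ℕ) (m : α → β) :
    (((Equiv.arrowCongr g (Equiv.refl β)).symm ^ t :
        Equiv.Perm (α → β)) m) = m ∘ ⇑(g ^ t) := by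
  induction t generalizing m with
  | zero => simp
  | succ t ih =>
      rw [pow_succ', Equiv.Perm.mul_apply, conj_apply, ih, pow_succ]
      funext i
      simp [Equiv.Perm.mul_apply]

lemma conj_pow {α β : Type*} (g : Equiv.Perm α) (k : ℤ) (m : α → β) :
    (((Equiv.arrowCongr g (Equiv.refl β)).symm ^ k :
        Equiv.Perm (α → β)) m) = m ∘ ⇑(g ^ k) := by
  cases k with
  | ofNat t =>
      rw [Int.ofNat_eq_coe, zpow_natCast, zpow_natCast]
      exact conj_pow_nat g t m
  | negSucc t =>
      rw [zpow_negSucc, zpow_negSucc]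
      have h1 := conj_pow_nat g (t + 1) (m ∘ ⇑(g ^ (t + 1))⁻¹)
      have h2 : (m ∘ ⇑(g ^ (t + 1))⁻¹) ∘ ⇑(g ^ (t + 1)) = m := by
        funext i
        simp
      rw [h2] at h1
      have h3 := congrArg (fun z => (((Equiv.arrowCongr g (Equiv.refl β)).symm ^ (t + 1) :
        Equiv.Perm (α → β)))⁻¹ z) h1
      simpa using h3.symm

lemma finRotate_pow_apply (n : ℕ) (t : ℕ) (i : Fin (n + 1)) :
    ((finRotate (n + 1)) ^ t) i = i + (t : Fin (n + 1)) := by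
  induction t generalizing i with
  | zero => simp
  | succ t ih =>
      rw [pow_succ, Equiv.Perm.mul_apply, ih, finRotate_succ_apply]
      have h : ((t + 1 : ℕ) : Fin (n + 1)) = (t : Fin (n + 1)) + 1 := by
        push_cast
        ring
      rw [h]
      ring

lemma finRotate_zpow (n : ℕ) (k : ℤ) :
    (finRotate (n + 1)) ^ k = (finRotate (n + 1)) ^ ((k % ((n : ℤ) + 1)).toNat) := by
  have hcast : ((n : ℤ) + 1) = ((n + 1 : ℕ) : ℤ) := by push_cast; ring
  have hne : ((n + 1 : ℕ) : ℤ) ≠ 0 := by positivity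
  have hord : (finRotate (n + 1)) ^ ((n + 1 : ℕ)) = 1 := by
    ext i
    rw [finRotate_pow_apply]
    simp [Fin.natCast_self]
  rw [hcast]
  conv_lhs => rw [← Int.mul_ediv_add_emod k ((n + 1 : ℕ) : ℤ)]
  rw [zpow_add, zpow_mul, zpow_natCast, hord, one_zpow, one_mul]
  conv_lhs => rw [← Int.toNat_of_nonneg (Int.emod_nonneg k hne), zpow_natCast]



lemma shift_iter {n : ℕ} {m : Fin (n + 1) → ℕ} {x : ℕ}
    (h : ∀ i, m (i + (x : Fin (n + 1))) = m i) :
    ∀ (t : ℕ) (i : Fin (n + 1)), m (i + ((t * x : ℕ) : Fin (n + 1))) = m i := by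
  intro t
  induction t with
  | zero => simp
  | succ t ih =>
      intro i
      have hc : (((t + 1) * x : ℕ) : Fin (n + 1))
          = ((t * x : ℕ) : Fin (n + 1)) + (x : Fin (n + 1)) := by
        push_cast
        ring
      rw [hc, ← add_assoc, h (i + ((t * x : ℕ) : Fin (n + 1)))]
      exact ih i

lemma cond_iff (n : ℕ) (κ : ℕ) (m : Fin (n + 1) → ℕ) :
    (∀ i, m (i + (κ : Fin (n + 1))) = m i) ↔
      (∀ i, m (i + ((Nat.gcd κ (n + 1) : ℕ) : Fin (n + 1))) = m i) := by
  set N := n + 1 with hNdef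
  set d := Nat.gcd κ N with hddef
  constructor
  · intro h i
    obtain ⟨t, ht⟩ : ∃ t : ℕ, (t * κ) % N = d % N := by
      set A := Nat.gcdA κ N with hA
      set B := Nat.gcdB κ N with hB
      have hbez : (d : ℤ) = κ * A + N * B := Nat.gcd_eq_gcd_ab κ N
      have hNpos : (0 : ℤ) < (N : ℤ) := by positivity
      refine ⟨(A % (N : ℤ)).toNat, ?_⟩
      have htZ : ((A % (N : ℤ)).toNat : ℤ) = A % N := Int.toNat_of_nonneg (Int.emod_nonneg A hNpos.ne')
      have hdiv : (N : ℤ) * (A / N) + A % N = A := Int.mul_ediv_add_emod A N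
      have hdvd : (N : ℤ) ∣ (d : ℤ) - ((A % (N : ℤ)).toNat : ℤ) * κ := by
        refine ⟨κ * (A / N) + B, ?_⟩
        rw [htZ]
        linear_combination hbez - (κ : ℤ) * hdiv
      have := (Nat.modEq_iff_dvd (n := N) (a := (A % (N : ℤ)).toNat * κ) (b := d)).mpr
        (by push_cast; exact_mod_cast hdvd)
      exact this
    have heq : ((d : ℕ) : Fin N) = ((t * κ : ℕ) : Fin N) := by
      apply Fin.ext
      rw [Fin.val_natCast, Fin.val_natCast, ht]
    rw [heq]
    exact shift_iter h t i
  · intro h i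
    have h2 := shift_iter h (κ / d) i
    rwa [Nat.div_mul_cancel (Nat.gcd_dvd_left κ N)] at h2

lemma const_on_classes {n d : ℕ} (hd : d ∣ (n + 1)) (hd0 : 0 < d) {m : Fin (n + 1) → ℕ}
    (h : ∀ i, m (i + (d : Fin (n + 1))) = m i) (i : Fin (n + 1)) :
    m i = m ⟨i.val % d, lt_of_lt_of_le (Nat.mod_lt _ hd0) (Nat.le_of_dvd (Nat.succ_pos n) hd)⟩ := by
  have hlt : i.val % d < n + 1 :=
    lt_of_lt_of_le (Nat.mod_lt _ hd0) (Nat.le_of_dvd (Nat.succ_pos n) hd)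
  have h2 := shift_iter h (i.val / d) ⟨i.val % d, hlt⟩
  have heq : (⟨i.val % d, lt_of_lt_of_le (Nat.mod_lt _ hd0) (Nat.le_of_dvd (Nat.succ_pos n) hd)⟩ : Fin (n+1))
      + ((i.val / d * d : ℕ) : Fin (n + 1)) = i := by
    apply Fin.ext
    rw [Fin.add_def, Fin.val_natCast]
    have hle : i.val / d * d ≤ i.val := Nat.div_mul_le_self _ _
    have : (i.val / d * d) % (n + 1) = i.val / d * d :=
      Nat.mod_eq_of_lt (lt_of_le_of_lt hle i.isLt)
    rw [this, Nat.mod_add_div' i.val d]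
    exact Nat.mod_eq_of_lt i.isLt
  conv_lhs => rw [← heq]
  exact h2

lemma key_sum {n d : ℕ} (hd : d ∣ (n + 1)) (hd0 : 0 < d) (m : Fin (n + 1) → ℕ)
    (h : ∀ i, m (i + (d : Fin (n + 1))) = m i) :
    ∑ i : Fin (n + 1), m i
      = ((n + 1) / d) * ∑ r : Fin d, m (Fin.castLE (Nat.le_of_dvd (Nat.succ_pos n) hd) r) := by
  have hde : d * ((n + 1) / d) = n + 1 := Nat.mul_div_cancel' hd
  have hlt : ∀ j : ℕ, j % d < n + 1 := fun j =>
    lt_of_lt_of_le (Nat.mod_lt _ hd0) (Nat.le_of_dvd (Nat.succ_pos n) hd)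
  have hstep1 : ∑ i : Fin (n + 1), m i = ∑ j ∈ range (n + 1), m ⟨j % d, hlt j⟩ := by
    rw [← Fin.sum_univ_eq_sum_range (fun j => m ⟨j % d, hlt j⟩) (n + 1)]
    exact Finset.sum_congr rfl fun i _ => const_on_classes hd hd0 h i
  have hfeq : ∀ j : ℕ, m ⟨j % d % d, hlt (j % d)⟩ = m ⟨j % d, hlt j⟩ := by
    intro j
    congr 1
    exact Fin.ext (Nat.mod_mod_of_dvd j (dvd_refl d))
  calc ∑ i : Fin (n + 1), m i = ∑ j ∈ range (n + 1), m ⟨j % d, hlt j⟩ := hstep1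
    _ = ∑ j ∈ range (d * ((n + 1) / d)), (fun j => m ⟨j % d, hlt j⟩) (j % d) := by
        rw [hde]
        exact Finset.sum_congr rfl fun j _ => (hfeq j).symm
    _ = ((n + 1) / d) * ∑ j ∈ range d, m ⟨j % d, hlt j⟩ :=
        sum_range_mod (fun j => m ⟨j % d, hlt j⟩) d ((n + 1) / d)
    _ = ((n + 1) / d) * ∑ r : Fin d, m (Fin.castLE (Nat.le_of_dvd (Nat.succ_pos n) hd) r) := by
        congr 1
        rw [← Fin.sum_univ_eq_sum_range (fun j => m ⟨j % d, hlt j⟩) d]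
        refine Finset.sum_congr rfl fun r _ => ?_
        congr 1
        exact Fin.ext (Nat.mod_eq_of_lt r.isLt)

lemma card_fixed (n ℓ d : ℕ) (hd : d ∣ (n + 1)) (hd0 : 0 < d) :
    (((Fintype.piFinset fun _ : Fin (n + 1) => range (ℓ + 1)).filter
        (fun m => ∑ i, m i = ℓ)).filter
      (fun m => ∀ i, m (i + (d : Fin (n + 1))) = m i)).card
    = if ((n + 1) / d) ∣ ℓ then (ℓ / ((n + 1) / d) + d - 1).choose (d - 1) else 0 := by
  have hle : d ≤ n + 1 := Nat.le_of_dvd (Nat.succ_pos n) hd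
  have hde : d * ((n + 1) / d) = n + 1 := Nat.mul_div_cancel' hd
  have he0 : 0 < (n + 1) / d := Nat.div_pos hle hd0
  set e := (n + 1) / d with hedef
  -- member fact
  have hfact : ∀ m : Fin (n + 1) → ℕ, (∑ i, m i = ℓ) →
      (∀ i, m (i + (d : Fin (n + 1))) = m i) →
      e ∣ ℓ ∧ ∑ r : Fin d, m (Fin.castLE hle r) = ℓ / e := by
    intro m hsum hcond
    have hk := key_sum hd hd0 m hcond
    rw [hsum] at hk
    constructor
    · exact ⟨_, hk⟩
    · rw [hk, Nat.mul_div_cancel_left _ he0]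
  by_cases hdl : e ∣ ℓ
  · rw [if_pos hdl, ← comp_card d (ℓ / e) hd0]
    apply Finset.card_nbij' (fun m => fun r : Fin d => m (Fin.castLE hle r))
      (fun g => fun i : Fin (n + 1) => g ⟨i.val % d, Nat.mod_lt _ hd0⟩)
    · intro m hm
      rw [Finset.mem_coe, Finset.mem_filter] at hm
      obtain ⟨hm1, hcond⟩ := hm
      rw [Finset.mem_filter, Fintype.mem_piFinset] at hm1
      obtain ⟨hpi, hsum⟩ := hm1
      obtain ⟨-, hT⟩ := hfact m hsum hcond
      rw [Finset.mem_coe, Finset.mem_filter, Fintype.mem_piFinset]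
      refine ⟨fun r => ?_, hT⟩
      rw [mem_range, Nat.lt_succ_iff, ← hT]
      exact Finset.single_le_sum (f := fun r : Fin d => m (Fin.castLE hle r))
        (fun _ _ => Nat.zero_le _) (mem_univ r)
    · intro g hg
      rw [Finset.mem_coe, Finset.mem_filter, Fintype.mem_piFinset] at hg
      obtain ⟨hgpi, hgsum⟩ := hg
      have hgle : ∀ r, g r ≤ ℓ / e := fun r => Nat.lt_succ_iff.mp (mem_range.mp (hgpi r))
      have hdd : (d % (n + 1)) % d = 0 := by
        rcases eq_or_lt_of_le hle with heq | hlt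
        · rw [heq, Nat.mod_self, Nat.zero_mod]
        · rw [Nat.mod_eq_of_lt hlt, Nat.mod_self]
      have hcond : ∀ i : Fin (n + 1),
          (fun i : Fin (n + 1) => g ⟨i.val % d, Nat.mod_lt _ hd0⟩) (i + (d : Fin (n + 1)))
            = (fun i : Fin (n + 1) => g ⟨i.val % d, Nat.mod_lt _ hd0⟩) i := by
        intro i
        simp only
        congr 1
        apply Fin.ext
        simp only [Fin.add_def, Fin.val_natCast]
        rw [Nat.mod_mod_of_dvd _ hd, Nat.add_mod, hdd, add_zero, Nat.mod_mod_of_dvd _ (dvd_refl d)]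
      have hsum2 : ∑ i : Fin (n + 1), g ⟨i.val % d, Nat.mod_lt _ hd0⟩ = ℓ := by
        have hk := key_sum hd hd0 (fun i : Fin (n + 1) => g ⟨i.val % d, Nat.mod_lt _ hd0⟩) hcond
        rw [hk]
        have : ∀ r : Fin d, g ⟨(Fin.castLE hle r).val % d, Nat.mod_lt _ hd0⟩ = g r := by
          intro r
          congr 1
          exact Fin.ext (Nat.mod_eq_of_lt r.isLt)
        rw [Finset.sum_congr rfl (fun r _ => this r), hgsum, Nat.mul_div_cancel' hdl]
      rw [Finset.mem_coe, Finset.mem_filter, Finset.mem_filter, Fintype.mem_piFinset]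
      refine ⟨⟨fun i => ?_, hsum2⟩, hcond⟩
      rw [mem_range, Nat.lt_succ_iff]
      exact le_trans (hgle _) (Nat.div_le_self _ _)
    · intro m hm
      rw [Finset.mem_coe, Finset.mem_filter] at hm
      obtain ⟨hm1, hcond⟩ := hm
      funext i
      have h1 := const_on_classes hd hd0 hcond i
      simp only
      have : (Fin.castLE hle ⟨i.val % d, Nat.mod_lt _ hd0⟩ : Fin (n + 1))
          = ⟨i.val % d, lt_of_lt_of_le (Nat.mod_lt _ hd0) hle⟩ := rfl
      rw [this]
      exact h1.symm
    · intro g hg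
      funext r
      simp only
      congr 1
      exact Fin.ext (Nat.mod_eq_of_lt r.isLt)
  · rw [if_neg hdl, Finset.card_eq_zero, Finset.filter_eq_empty_iff]
    intro m hm
    rw [Finset.mem_filter] at hm
    intro hcond
    exact hdl (hfact m hm.2 hcond).1


end CSPaux

open CSPaux

set_option maxHeartbeats 1000000 in
/-- **Cyclic sieving phenomenon for type `A_n^(1)`.**
For `n ≥ 1`, `ℓ ≥ 0` and `ζ = exp(2πi/(n+1))`, for every integer `k`, the number of
`(n+1)`-tuples `m` of nonnegative integers with `∑ m_i = ℓ` fixed by the `k`-th power of the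
cyclic shift `(σ·m)_i = m_{i+1 mod (n+1)}` equals `∑_m ζ^(k·ev(m))`, where
`ev(m) = ∑ i·m_i`. -/
theorem stmt_0 (n ℓ : ℕ) (hn : 1 ≤ n) (k : ℤ) :
    ((((Fintype.piFinset fun _ : Fin (n + 1) => Finset.range (ℓ + 1)).filter
          (fun m => ∑ i, m i = ℓ)).filter
        (fun m =>
          (((Equiv.arrowCongr (finRotate (n + 1)) (Equiv.refl ℕ)).symm ^ k :
              Equiv.Perm (Fin (n + 1) → ℕ)) m = m))).card : ℂ)
      = ∑ m ∈ (Fintype.piFinset fun _ : Fin (n + 1) => Finset.range (ℓ + 1)).filter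
            (fun m => ∑ i, m i = ℓ),
          Complex.exp (2 * Real.pi * Complex.I / (n + 1)) ^
            (k * ((∑ i : Fin (n + 1), (i : ℕ) * m i : ℕ) : ℤ)) := by
  set ζ : ℂ := Complex.exp (2 * Real.pi * Complex.I / (n + 1)) with hζdef
  have hcastC : ((n + 1 : ℕ) : ℂ) = (n : ℂ) + 1 := by push_cast; ring
  have hζ : IsPrimitiveRoot ζ (n + 1) := by
    have h := Complex.isPrimitiveRoot_exp (n + 1) (Nat.succ_ne_zero n)
    rwa [hcastC] at h
  have hζ0 : ζ ≠ 0 := Complex.exp_ne_zero _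
  set κ : ℕ := (k % ((n : ℤ) + 1)).toNat with hκdef
  have hcastZ : ((n + 1 : ℕ) : ℤ) = (n : ℤ) + 1 := by push_cast; ring
  have hNZne : ((n : ℤ) + 1) ≠ 0 := by positivity
  set d : ℕ := Nat.gcd κ (n + 1) with hddef
  have hd0 : 0 < d := Nat.gcd_pos_of_pos_right κ (Nat.succ_pos n)
  have hdN : d ∣ (n + 1) := Nat.gcd_dvd_right κ (n + 1)
  set e : ℕ := (n + 1) / d with hedef
  have hde : d * e = n + 1 := Nat.mul_div_cancel' hdN
  have he0 : 0 < e := Nat.div_pos (Nat.le_of_dvd (Nat.succ_pos n) hdN) hd0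
  set ω : ℂ := ζ ^ κ with hωdef
  have hω : IsPrimitiveRoot ω e := by
    have h1 : IsPrimitiveRoot (ζ ^ d) e := hζ.pow (Nat.succ_pos n) hde.symm
    have h2 := h1.pow_of_coprime (κ / d) (Nat.coprime_div_gcd_div_gcd hd0)
    rwa [← pow_mul, Nat.mul_div_cancel' (Nat.gcd_dvd_left κ (n + 1))] at h2
  have hωe : ω ^ e = 1 := hω.pow_eq_one
  -- ζ ^ k = ω
  have hzk : ζ ^ k = ω := by
    have hord : ζ ^ ((n : ℤ) + 1) = 1 := by
      rw [← hcastZ, zpow_natCast, hζ.pow_eq_one]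
    conv_lhs => rw [← Int.mul_ediv_add_emod k ((n : ℤ) + 1)]
    rw [zpow_add₀ hζ0, zpow_mul, hord, one_zpow, one_mul, hωdef, hκdef,
      ← zpow_natCast ζ ((k % ((n : ℤ) + 1)).toNat),
      Int.toNat_of_nonneg (Int.emod_nonneg k hNZne)]
  -- LHS
  have hiff : ∀ m ∈ (Fintype.piFinset fun _ : Fin (n + 1) => Finset.range (ℓ + 1)).filter
      (fun m => ∑ i, m i = ℓ),
      ((((Equiv.arrowCongr (finRotate (n + 1)) (Equiv.refl ℕ)).symm ^ k :
          Equiv.Perm (Fin (n + 1) → ℕ)) m = m) ↔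
        (∀ i, m (i + ((d : ℕ) : Fin (n + 1))) = m i)) := by
    intro m _
    rw [conj_pow, finRotate_zpow n k, _root_.funext_iff]
    have h1 : ∀ i : Fin (n + 1),
        (m ∘ ⇑(finRotate (n + 1) ^ κ)) i = m (i + (κ : Fin (n + 1))) := by
      intro i
      simp only [Function.comp_apply]
      rw [finRotate_pow_apply]
    rw [forall_congr' (fun i => by rw [h1 i])]
    exact cond_iff n κ m
  rw [Finset.filter_congr hiff, card_fixed n ℓ d hdN hd0]
  -- RHS
  have hsummand : ∀ m ∈ (Fintype.piFinset fun _ : Fin (n + 1) => Finset.range (ℓ + 1)).filter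
      (fun m => ∑ i, m i = ℓ),
      ζ ^ (k * ((∑ i : Fin (n + 1), (i : ℕ) * m i : ℕ) : ℤ))
        = ∏ i : Fin (n + 1), (fun a t => ω ^ (a * t)) (i : ℕ) (m i) := by
    intro m _
    rw [zpow_mul, hzk, zpow_natCast]
    exact (Finset.prod_pow_eq_pow_sum univ (fun i : Fin (n + 1) => (i : ℕ) * m i) ω).symm
  rw [Finset.sum_congr rfl hsummand, ← bridge (n + 1) ℓ (fun a t => ω ^ (a * t))]
  -- product evaluates to Fser e d
  have hωmod : ∀ i : ℕ, ω ^ i = ω ^ (i % e) := by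
    intro i
    conv_lhs => rw [← Nat.div_add_mod i e]
    rw [pow_add, pow_mul, hωe, one_pow, one_mul]
  have hP : ∏ i ∈ range (n + 1), (1 - PowerSeries.C (ω ^ i) * X) = (1 - X ^ e) ^ d := by
    calc ∏ i ∈ range (n + 1), (1 - PowerSeries.C (ω ^ i) * X)
        = ∏ i ∈ range (e * d), (fun r => 1 - PowerSeries.C (ω ^ r) * X) (i % e) := by
          rw [mul_comm e d, hde]
          exact Finset.prod_congr rfl fun i _ => by rw [hωmod i]
      _ = (∏ r ∈ range e, (1 - PowerSeries.C (ω ^ r) * X)) ^ d :=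
          prod_range_mod (fun r => 1 - PowerSeries.C (ω ^ r) * X) e d
      _ = (1 - X ^ e) ^ d := by rw [ps_prod_one_sub he0 hω]
  have hPG : (∏ i ∈ range (n + 1), (1 - PowerSeries.C (ω ^ i) * X))
      * (∏ i ∈ range (n + 1), PowerSeries.mk ((fun a t => ω ^ (a * t)) i)) = 1 := by
    rw [← Finset.prod_mul_distrib]
    have h1 : ∀ i ∈ range (n + 1),
        (1 - PowerSeries.C (ω ^ i) * X) * PowerSeries.mk ((fun a t => ω ^ (a * t)) i) = 1 := by
      intro i _
      have h2 : PowerSeries.mk ((fun a t => ω ^ (a * t)) i)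
          = PowerSeries.mk (fun t => (ω ^ i) ^ t) := by
        ext t
        simp only [coeff_mk]
        rw [pow_mul]
      rw [h2]
      exact geom_inv (ω ^ i)
    rw [Finset.prod_congr rfl h1]
    exact Finset.prod_const_one
  have hFinv : (∏ i ∈ range (n + 1), (1 - PowerSeries.C (ω ^ i) * X)) * Fser e d = 1 := by
    rw [hP]
    exact Fser_inv he0 d hd0
  have hG := CSPaux.inv_unique hPG hFinv
  rw [hG]
  simp only [Fser, coeff_mk]
  split_ifs with hdl
  · ring
  · norm_num
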